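/- Let C be a path category and f : X → Y a morphism. Then the induced map Path(f) : Path(X) → Path(Y) (sending a path embedding m to the embedding part of the factorisation of f ∘ m) is a tree morphism: for every m ∈ Path(X), Path(f) restricts to a bijection from the down-set of m to the down-set of Path(f)(m). -/

import Mathlib

open CategoryTheory CategoryTheory.Limits

universe v u

variable {C : Type u} [Category.{v} C]

/-- A weak factorisation system `(Q, M)` on a category `C`. -/
structure WFS (C : Type u) [Category.{v} C] where
  Q : MorphismProperty C
  M : MorphismProperty C
  fact : ∀ {X Y : C} (f : X ⟶ Y), ∃ (Z : C) (e : X ⟶ Z) (m : Z ⟶ Y), Q e ∧ M m ∧ e ≫ m = f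
  Q_iff : ∀ {X Y : C} (f : X ⟶ Y), Q f ↔ ∀ ⦃A B : C⦄ (g : A ⟶ B), M g → HasLiftingProperty f g
  M_iff : ∀ {X Y : C} (g : X ⟶ Y), M g ↔ ∀ ⦃A B : C⦄ (f : A ⟶ B), Q f → HasLiftingProperty f g

/-- A proper factorisation system: a weak factorisation system in which every `Q`-morphism is an
epimorphism and every `M`-morphism is a monomorphism. -/
structure ProperWFS (C : Type u) [Category.{v} C] extends WFS C where
  q_epi : ∀ {X Y : C} (f : X ⟶ Y), Q f → Epi f
  m_mono : ∀ {X Y : C} (f : X ⟶ Y), M f → Mono f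


/-- A stable proper factorisation system: additionally, the pullback of a quotient (`Q`-morphism)
along an embedding (`M`-morphism) exists and is again a quotient. -/
structure StableWFS (C : Type u) [Category.{v} C] extends ProperWFS C where
  stable : ∀ {X Z W : C} (e : X ⟶ W) (m : Z ⟶ W), Q e → M m →
    ∃ (P : C) (p₁ : P ⟶ X) (p₂ : P ⟶ Z), IsPullback p₁ p₂ e m ∧ Q p₂

/-- The type of `M`-subobjects (representatives): embeddings into `X`. -/
abbrev MSub (M : MorphismProperty C) (X : C) : Type (max u v) :=
  Σ S : C, {m : S ⟶ X // M m}

/-- `M`-subobjects are preordered by factorisation; the poset of `M`-subobjects is the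
induced partial order on the antisymmetrization. -/
instance (M : MorphismProperty C) (X : C) : Preorder (MSub M X) where
  le a b := ∃ i : a.1 ⟶ b.1, i ≫ b.2.1 = a.2.1
  le_refl a := ⟨𝟙 a.1, Category.id_comp _⟩
  le_trans a b c h₁ h₂ := by
    obtain ⟨i, hi⟩ := h₁
    obtain ⟨j, hj⟩ := h₂
    exact ⟨i ≫ j, by rw [Category.assoc, hj, hi]⟩

/-- An object `X` is a path if its poset of `M`-subobjects is a finite chain, i.e. the preorder
of `M`-subobjects is total and has finitely many equivalence classes. -/
def IsPathOb (M : MorphismProperty C) (X : C) : Prop :=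
  (∀ a b : MSub M X, a ≤ b ∨ b ≤ a) ∧ Finite (Antisymmetrization (MSub M X) (· ≤ ·))

/-- A path category: a category with a stable proper factorisation system having all small
coproducts of paths, in which every path is connected, and satisfying the 2-out-of-3 condition
for quotients between paths. -/
structure PathCategory (C : Type u) [Category.{v} C] extends StableWFS C where
  pathCoproducts : ∀ {ι : Type v} (Ps : ι → C), (∀ i, IsPathOb M (Ps i)) →
    HasColimit (Discrete.functor Ps)
  connected : ∀ {ι : Type v} [Nonempty ι] (Ps : ι → C), (∀ i, IsPathOb M (Ps i)) →
    ∀ (c : ColimitCocone (Discrete.functor Ps)) {P : C}, IsPathOb M P →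
      ∀ f : P ⟶ c.cocone.pt, ∃ (i : ι) (g : P ⟶ Ps i), g ≫ c.cocone.ι.app ⟨i⟩ = f
  two_of_three : ∀ {P R S : C}, IsPathOb M P → IsPathOb M R → IsPathOb M S →
    ∀ (f : P ⟶ R) (g : R ⟶ S), Q (f ≫ g) → Q f

/-- The direct image `∃_f` of an `M`-subobject along a morphism `f`: the `M`-part of a chosen
(quotient, embedding) factorisation of `f ∘ m`. -/
noncomputable def imgSub (M Q : MorphismProperty C)
    (fact : ∀ {X Y : C} (f : X ⟶ Y), ∃ (Z : C) (e : X ⟶ Z) (m : Z ⟶ Y), Q e ∧ M m ∧ e ≫ m = f)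
    {X Y : C} (f : X ⟶ Y) (a : MSub M X) : MSub M Y :=
  ⟨(fact (a.2.1 ≫ f)).choose, (fact (a.2.1 ≫ f)).choose_spec.choose_spec.choose,
    (fact (a.2.1 ≫ f)).choose_spec.choose_spec.choose_spec.2.1⟩


section Helpers

variable (pc : PathCategory C)

lemma liftOf {A B A' B' : C} {e : A ⟶ B} {mm : A' ⟶ B'} (h : HasLiftingProperty e mm)
    (u : A ⟶ A') (v : B ⟶ B') (w : u ≫ mm = e ≫ v) :
    ∃ l : B ⟶ A', e ≫ l = u ∧ l ≫ mm = v := by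
  have sq : CommSq u e mm v := ⟨w⟩
  have := h.sq_hasLift sq
  exact ⟨sq.lift, sq.fac_left, sq.fac_right⟩

lemma pcLift {A B A' B' : C} {e : A ⟶ B} {mm : A' ⟶ B'} (he : pc.Q e) (hmm : pc.M mm)
    (u : A ⟶ A') (v : B ⟶ B') (w : u ≫ mm = e ≫ v) :
    ∃ l : B ⟶ A', e ≫ l = u ∧ l ≫ mm = v :=
  liftOf ((pc.Q_iff e).mp he mm hmm) u v w

lemma M_comp {A B Z : C} {g : A ⟶ B} {h : B ⟶ Z} (hg : pc.M g) (hh : pc.M h) :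
    pc.M (g ≫ h) := by
  rw [pc.M_iff]
  intro E F q hq
  haveI := (pc.M_iff g).mp hg q hq
  haveI := (pc.M_iff h).mp hh q hq
  exact inferInstance

lemma M_cancel {A B Z : C} (g : A ⟶ B) (h : B ⟶ Z) (hgh : pc.M (g ≫ h)) (hh : pc.M h) :
    pc.M g := by
  rw [pc.M_iff]
  intro E F q hq
  have hmono := pc.m_mono h hh
  constructor
  intro u v sq
  obtain ⟨l, hl1, hl2⟩ := liftOf ((pc.M_iff (g ≫ h)).mp hgh q hq) u (v ≫ h)
    (by rw [← Category.assoc, sq.w, Category.assoc])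
  exact ⟨⟨⟨l, hl1, by rw [← cancel_mono h, Category.assoc, hl2]⟩⟩⟩

lemma M_pullback {W P S I : C} {p₁ : W ⟶ P} {p₂ : W ⟶ S} {e : P ⟶ I} {mm : S ⟶ I}
    (hpb : IsPullback p₁ p₂ e mm) (hmm : pc.M mm) : pc.M p₁ := by
  rw [pc.M_iff]
  intro A B q hq
  constructor
  intro u v sq
  obtain ⟨l, hl1, hl2⟩ := liftOf ((pc.M_iff mm).mp hmm q hq) (u ≫ p₂) (v ≫ e)
    (by rw [Category.assoc, ← hpb.w, ← Category.assoc, sq.w, Category.assoc])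
  refine ⟨⟨⟨hpb.lift v l (by rw [hl2]), ?_, hpb.lift_fst v l (by rw [hl2])⟩⟩⟩
  apply hpb.hom_ext
  · rw [Category.assoc, hpb.lift_fst, ← sq.w]
  · rw [Category.assoc, hpb.lift_snd, hl1]

lemma imgSub_spec {X Y : C} (f : X ⟶ Y) (a : MSub pc.M X) :
    ∃ e : a.1 ⟶ (imgSub pc.M pc.Q pc.fact f a).1,
      pc.Q e ∧ e ≫ (imgSub pc.M pc.Q pc.fact f a).2.1 = a.2.1 ≫ f :=
  ⟨(pc.fact (a.2.1 ≫ f)).choose_spec.choose,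
    (pc.fact (a.2.1 ≫ f)).choose_spec.choose_spec.choose_spec.1,
    (pc.fact (a.2.1 ≫ f)).choose_spec.choose_spec.choose_spec.2.2⟩

lemma imgSub_equiv {X Y : C} (f : X ⟶ Y) (a : MSub pc.M X) {I : C} (e : a.1 ⟶ I) (mi : I ⟶ Y)
    (he : pc.Q e) (hmi : pc.M mi) (w : e ≫ mi = a.2.1 ≫ f) :
    imgSub pc.M pc.Q pc.fact f a ≤ ⟨I, mi, hmi⟩ ∧
      (⟨I, mi, hmi⟩ : MSub pc.M Y) ≤ imgSub pc.M pc.Q pc.fact f a := by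
  obtain ⟨e₀, he₀, hw₀⟩ := imgSub_spec pc f a
  constructor
  · obtain ⟨l, _, hl⟩ := pcLift pc he₀ hmi e (imgSub pc.M pc.Q pc.fact f a).2.1
      (by rw [w, hw₀])
    exact ⟨l, hl⟩
  · obtain ⟨l, _, hl⟩ := pcLift pc he (imgSub pc.M pc.Q pc.fact f a).2.2 e₀ mi
      (by rw [hw₀, w])
    exact ⟨l, hl⟩

lemma imgSub_mono {X Y : C} (f : X ⟶ Y) {a b : MSub pc.M X} (h : a ≤ b) :
    imgSub pc.M pc.Q pc.fact f a ≤ imgSub pc.M pc.Q pc.fact f b := by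
  obtain ⟨i, hi⟩ := h
  obtain ⟨ea, hea, hwa⟩ := imgSub_spec pc f a
  obtain ⟨eb, _, hwb⟩ := imgSub_spec pc f b
  obtain ⟨l, _, hl⟩ := pcLift pc hea (imgSub pc.M pc.Q pc.fact f b).2.2 (i ≫ eb)
    (imgSub pc.M pc.Q pc.fact f a).2.1
    (by rw [Category.assoc, hwb, hwa, ← Category.assoc, hi])
  exact ⟨l, hl⟩

lemma path_of_sub {S P : C} (m' : S ⟶ P) (hm' : pc.M m') (hP : IsPathOb pc.M P) :
    IsPathOb pc.M S := by
  classical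
  let c : MSub pc.M S → MSub pc.M P := fun a => ⟨a.1, a.2.1 ≫ m', M_comp pc a.2.2 hm'⟩
  have hmono := pc.m_mono m' hm'
  have hpres : ∀ a b : MSub pc.M S, a ≤ b ↔ c a ≤ c b := by
    intro a b
    constructor
    · rintro ⟨i, hi⟩
      exact ⟨i, by simp only [c, ← hi, Category.assoc]⟩
    · rintro ⟨i, hi⟩
      refine ⟨i, ?_⟩
      simp only [c] at hi
      rw [← cancel_mono m', Category.assoc]
      exact hi
  constructor
  · intro a b
    rcases hP.1 (c a) (c b) with h | h
    · exact Or.inl ((hpres a b).mpr h)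
    · exact Or.inr ((hpres b a).mpr h)
  · have := hP.2
    have htest : IsPreorder (MSub pc.M P) (· ≤ ·) := inferInstance
    refine Finite.of_injective
      (fun x : Antisymmetrization (MSub pc.M S) (· ≤ ·) =>
        toAntisymmetrization (· ≤ ·) (c (ofAntisymmetrization (· ≤ ·) x))) ?_
    intro x y hxy
    have h1 : c (ofAntisymmetrization (· ≤ ·) x) ≤ c (ofAntisymmetrization (· ≤ ·) y) :=
      toAntisymmetrization_le_toAntisymmetrization_iff.mp (le_of_eq hxy)
    have h2 : c (ofAntisymmetrization (· ≤ ·) y) ≤ c (ofAntisymmetrization (· ≤ ·) x) :=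
      toAntisymmetrization_le_toAntisymmetrization_iff.mp (le_of_eq hxy.symm)
    rw [← toAntisymmetrization_ofAntisymmetrization (· ≤ ·) x,
      ← toAntisymmetrization_ofAntisymmetrization (· ≤ ·) y]
    exact le_antisymm
      (toAntisymmetrization_le_toAntisymmetrization_iff.mpr ((hpres _ _).mpr h1))
      (toAntisymmetrization_le_toAntisymmetrization_iff.mpr ((hpres _ _).mpr h2))

lemma path_of_quot {P I : C} (e : P ⟶ I) (he : pc.Q e) (hP : IsPathOb pc.M P) :
    IsPathOb pc.M I := by
  classical
  have key : ∀ a : MSub pc.M I, ∃ b : MSub pc.M P,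
      imgSub pc.M pc.Q pc.fact e b ≤ a ∧ a ≤ imgSub pc.M pc.Q pc.fact e b := by
    rintro ⟨A, mA, hmA⟩
    obtain ⟨W, p₁, p₂, hpb, hq⟩ := pc.stable e mA he hmA
    have hM1 : pc.M p₁ := M_pullback pc hpb hmA
    exact ⟨⟨W, p₁, hM1⟩, imgSub_equiv pc e ⟨W, p₁, hM1⟩ p₂ mA hq hmA hpb.w.symm⟩
  constructor
  · intro a b
    obtain ⟨ba, ha1, ha2⟩ := key a
    obtain ⟨bb, hb1, hb2⟩ := key b
    rcases hP.1 ba bb with h | h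
    · exact Or.inl (le_trans ha2 (le_trans (imgSub_mono pc e h) hb1))
    · exact Or.inr (le_trans hb2 (le_trans (imgSub_mono pc e h) ha1))
  · have := hP.2
    have htest : IsPreorder (MSub pc.M I) (· ≤ ·) := inferInstance
    have htest2 : IsPreorder (MSub pc.M P) (· ≤ ·) := inferInstance
    refine Finite.of_surjective
      (fun x : Antisymmetrization (MSub pc.M P) (· ≤ ·) =>
        toAntisymmetrization (· ≤ ·)
          (imgSub pc.M pc.Q pc.fact e (ofAntisymmetrization (· ≤ ·) x))) ?_
    intro y
    obtain ⟨b, hb1, hb2⟩ := key (ofAntisymmetrization (· ≤ ·) y)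
    refine ⟨toAntisymmetrization (· ≤ ·) b, ?_⟩
    have hrel : AntisymmRel (· ≤ ·) (ofAntisymmetrization (· ≤ ·)
        (toAntisymmetrization (· ≤ ·) b)) b := by
      constructor
      · exact toAntisymmetrization_le_toAntisymmetrization_iff.mp
          (le_of_eq (toAntisymmetrization_ofAntisymmetrization (· ≤ ·)
            (toAntisymmetrization (· ≤ ·) b)))
      · exact toAntisymmetrization_le_toAntisymmetrization_iff.mp
          (le_of_eq (toAntisymmetrization_ofAntisymmetrization (· ≤ ·)
            (toAntisymmetrization (· ≤ ·) b)).symm)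
    have e1 : toAntisymmetrization (· ≤ ·)
        (imgSub pc.M pc.Q pc.fact e (ofAntisymmetrization (· ≤ ·)
          (toAntisymmetrization (· ≤ ·) b)))
        = toAntisymmetrization (· ≤ ·) (imgSub pc.M pc.Q pc.fact e b) :=
      le_antisymm
        (toAntisymmetrization_le_toAntisymmetrization_iff.mpr (imgSub_mono pc e hrel.1))
        (toAntisymmetrization_le_toAntisymmetrization_iff.mpr (imgSub_mono pc e hrel.2))
    have e2 : toAntisymmetrization (· ≤ ·) (imgSub pc.M pc.Q pc.fact e b)
        = toAntisymmetrization (· ≤ ·) (ofAntisymmetrization (· ≤ ·) y) :=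
      le_antisymm (toAntisymmetrization_le_toAntisymmetrization_iff.mpr hb1)
        (toAntisymmetrization_le_toAntisymmetrization_iff.mpr hb2)
    show toAntisymmetrization (· ≤ ·)
        (imgSub pc.M pc.Q pc.fact e (ofAntisymmetrization (· ≤ ·)
          (toAntisymmetrization (· ≤ ·) b))) = y
    rw [e1, e2, toAntisymmetrization_ofAntisymmetrization]

lemma le_of_img_equiv {X Y : C} (f : X ⟶ Y) {p q : MSub pc.M X}
    (hp : IsPathOb pc.M p.1) (hq : IsPathOb pc.M q.1) (hpq : p ≤ q)
    (h12 : imgSub pc.M pc.Q pc.fact f p ≤ imgSub pc.M pc.Q pc.fact f q)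
    (h21 : imgSub pc.M pc.Q pc.fact f q ≤ imgSub pc.M pc.Q pc.fact f p) : q ≤ p := by
  obtain ⟨k, hk⟩ := hpq
  obtain ⟨ep, hep, hwp⟩ := imgSub_spec pc f p
  obtain ⟨eq', heq', hwq⟩ := imgSub_spec pc f q
  obtain ⟨u, hu⟩ := h12
  obtain ⟨v, hv⟩ := h21
  have hmp := pc.m_mono _ (imgSub pc.M pc.Q pc.fact f p).2.2
  have hmq := pc.m_mono _ (imgSub pc.M pc.Q pc.fact f q).2.2
  obtain ⟨l, hl1, hl2⟩ := pcLift pc hep (imgSub pc.M pc.Q pc.fact f q).2.2 (k ≫ eq')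
    (imgSub pc.M pc.Q pc.fact f p).2.1
    (by rw [Category.assoc, hwq, hwp, ← Category.assoc, hk])
  have hlv : l ≫ v = 𝟙 _ := by
    rw [← cancel_mono (imgSub pc.M pc.Q pc.fact f p).2.1, Category.assoc, hv, hl2,
      Category.id_comp]
  have hvl : v ≫ l = 𝟙 _ := by
    rw [← cancel_mono (imgSub pc.M pc.Q pc.fact f q).2.1, Category.assoc, hl2, hv,
      Category.id_comp]
  haveI : IsIso l := ⟨v, hlv, hvl⟩
  -- Q (k ≫ eq')
  have hQke : pc.Q (k ≫ eq') := by
    rw [← hl1, pc.Q_iff]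
    intro A B g hg
    haveI := (pc.Q_iff ep).mp hep g hg
    exact HasLiftingProperty.of_comp_left ep l g
  -- paths
  have hIq : IsPathOb pc.M (imgSub pc.M pc.Q pc.fact f q).1 := path_of_quot pc eq' heq' hq
  have hQk : pc.Q k := pc.two_of_three hp hq hIq k eq' hQke
  have hMk : pc.M k := M_cancel pc k q.2.1 (by rw [hk]; exact p.2.2) q.2.2
  obtain ⟨l', hl'1, hl'2⟩ := liftOf ((pc.Q_iff k).mp hQk k hMk) (𝟙 _) (𝟙 _)
    (by rw [Category.id_comp, Category.comp_id])
  exact ⟨l', by rw [← hk, ← Category.assoc, hl'2, Category.id_comp]⟩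

end Helpers

/-- In a path category, for any morphism `f : X ⟶ Y`, the induced map
`Path(f) : Path(X) → Path(Y)` is a tree morphism: it sends path embeddings to path embeddings,
is monotone, and restricts to a bijection (surjective and injective up to equivalence of
subobjects) from the down-set of `m` onto the down-set of `Path(f)(m)`. -/
theorem stmt12 (pc : PathCategory C) {X Y : C} (f : X ⟶ Y)
    (m : MSub pc.M X) (hm : IsPathOb pc.M m.1) :
    IsPathOb pc.M (imgSub pc.M pc.Q pc.fact f m).1 ∧
    (∀ p : MSub pc.M X, IsPathOb pc.M p.1 → p ≤ m →
      imgSub pc.M pc.Q pc.fact f p ≤ imgSub pc.M pc.Q pc.fact f m) ∧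
    (∀ n : MSub pc.M Y, IsPathOb pc.M n.1 → n ≤ imgSub pc.M pc.Q pc.fact f m →
      ∃ p : MSub pc.M X, IsPathOb pc.M p.1 ∧ p ≤ m ∧
        imgSub pc.M pc.Q pc.fact f p ≤ n ∧ n ≤ imgSub pc.M pc.Q pc.fact f p) ∧
    (∀ p₁ p₂ : MSub pc.M X, IsPathOb pc.M p₁.1 → IsPathOb pc.M p₂.1 → p₁ ≤ m → p₂ ≤ m →
      imgSub pc.M pc.Q pc.fact f p₁ ≤ imgSub pc.M pc.Q pc.fact f p₂ →
      imgSub pc.M pc.Q pc.fact f p₂ ≤ imgSub pc.M pc.Q pc.fact f p₁ →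
      p₁ ≤ p₂ ∧ p₂ ≤ p₁) := by
  obtain ⟨em, hem, hwm⟩ := imgSub_spec pc f m
  refine ⟨path_of_quot pc em hem hm, fun p _ hpm => imgSub_mono pc f hpm, ?_, ?_⟩
  · rintro ⟨N, mN, hmN⟩ hn ⟨j, hj⟩
    dsimp only at j hj hn
    have hMj : pc.M j := M_cancel pc j (imgSub pc.M pc.Q pc.fact f m).2.1
      (by rw [hj]; exact hmN) (imgSub pc.M pc.Q pc.fact f m).2.2
    obtain ⟨W, p₁, p₂, hpb, hq⟩ := pc.stable em j hem hMj
    have hMp₁ : pc.M p₁ := M_pullback pc hpb hMj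
    have hw : p₂ ≫ mN = (p₁ ≫ m.2.1) ≫ f := by
      rw [← hj, ← Category.assoc, ← hpb.w, Category.assoc, hwm, ← Category.assoc]
    refine ⟨⟨W, p₁ ≫ m.2.1, M_comp pc hMp₁ m.2.2⟩, path_of_sub pc p₁ hMp₁ hm,
      ⟨p₁, rfl⟩, ?_, ?_⟩
    · exact (imgSub_equiv pc f ⟨W, p₁ ≫ m.2.1, M_comp pc hMp₁ m.2.2⟩ p₂ mN hq hmN hw).1
    · exact (imgSub_equiv pc f ⟨W, p₁ ≫ m.2.1, M_comp pc hMp₁ m.2.2⟩ p₂ mN hq hmN hw).2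
  · intro p₁ p₂ hp₁ hp₂ hpm₁ hpm₂ h12 h21
    have hcomp : p₁ ≤ p₂ ∨ p₂ ≤ p₁ := by
      obtain ⟨i₁, hi₁⟩ := hpm₁
      obtain ⟨i₂, hi₂⟩ := hpm₂
      have hMi₁ : pc.M i₁ := M_cancel pc i₁ m.2.1 (by rw [hi₁]; exact p₁.2.2) m.2.2
      have hMi₂ : pc.M i₂ := M_cancel pc i₂ m.2.1 (by rw [hi₂]; exact p₂.2.2) m.2.2
      rcases hm.1 ⟨p₁.1, i₁, hMi₁⟩ ⟨p₂.1, i₂, hMi₂⟩ with ⟨k, hk⟩ | ⟨k, hk⟩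
      · exact Or.inl ⟨k, by rw [← hi₂, ← Category.assoc, hk, hi₁]⟩
      · exact Or.inr ⟨k, by rw [← hi₁, ← Category.assoc, hk, hi₂]⟩
    rcases hcomp with h | h
    · exact ⟨h, le_of_img_equiv pc f hp₁ hp₂ h h12 h21⟩
    · exact ⟨le_of_img_equiv pc f hp₂ hp₁ h h21 h12, h⟩
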